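/- Let f(z) = ∑_{n≥0} a_n z^n be an entire power series in the class K. Then sup_{t>0} σ_f²(t) = 1/4 if and only if f(z) = a + b z for some real numbers a, b > 0. -/

import Mathlib

open Filter Topology MeasureTheory
open scoped ENNReal NNReal Classical

noncomputable section

/-- `psum a t = ∑ aₙ tⁿ`, the value `f(t)` of the power series with coefficients `a`. -/
def psum (a : ℕ → ℝ) (t : ℝ) : ℝ := ∑' n : ℕ, a n * t ^ n

/-- The mean `m_f(t)` of the Khinchin family of the power series with coefficients `a`. -/
def meanK (a : ℕ → ℝ) (t : ℝ) : ℝ :=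
  (∑' n : ℕ, (n : ℝ) * a n * t ^ n) / ∑' n : ℕ, a n * t ^ n

/-- The variance `σ_f²(t)` of the Khinchin family. -/
def varK (a : ℕ → ℝ) (t : ℝ) : ℝ :=
  (∑' n : ℕ, (n : ℝ) ^ 2 * a n * t ^ n) / (∑' n : ℕ, a n * t ^ n) - meanK a t ^ 2

/-- The standard deviation `σ_f(t)` of the Khinchin family. -/
def sdK (a : ℕ → ℝ) (t : ℝ) : ℝ := Real.sqrt (varK a t)

/-- The moment `E(X_t^p)` of real exponent `p` of the Khinchin family. -/
def momK (a : ℕ → ℝ) (p : ℝ) (t : ℝ) : ℝ :=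
  (∑' n : ℕ, (n : ℝ) ^ p * a n * t ^ n) / ∑' n : ℕ, a n * t ^ n

/-- The filter of `t ↑ R`: `atTop` when `R = ∞`, and `𝓝[<] R` when `R < ∞`. -/
def nhdsUpto (R : ℝ≥0∞) : Filter ℝ :=
  if R = ⊤ then atTop else nhdsWithin R.toReal (Set.Iio R.toReal)

set_option maxHeartbeats 1000000


private theorem sumN (a : ℕ → ℝ) (hpos : ∀ n, 0 ≤ a n)
    (hconv : ∀ t : ℝ, Summable fun n : ℕ => a n * t ^ n) (t : ℝ) :
    Summable (fun n : ℕ => (n : ℝ) * a n * t ^ n) := by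
  apply Summable.of_norm_bounded ((hconv (2 * |t|)).abs)
  intro n
  have h1 : (n : ℝ) ≤ 2 ^ n := by exact_mod_cast (Nat.lt_two_pow_self (n := n)).le
  simp only [Real.norm_eq_abs, abs_mul, abs_pow, abs_abs, abs_of_nonneg (hpos n),
    abs_of_nonneg (Nat.cast_nonneg (α := ℝ) n), mul_pow, abs_of_nonneg (pow_nonneg (abs_nonneg t) n),
    abs_of_nonneg (pow_nonneg (by norm_num : (0:ℝ) ≤ 2) n)]
  calc (n : ℝ) * a n * |t| ^ n ≤ 2 ^ n * a n * |t| ^ n := by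
        apply mul_le_mul_of_nonneg_right (mul_le_mul_of_nonneg_right h1 (hpos n)) (by positivity)
    _ = a n * (2 ^ n * |t| ^ n) := by ring

private theorem sumN2 (a : ℕ → ℝ) (hpos : ∀ n, 0 ≤ a n)
    (hconv : ∀ t : ℝ, Summable fun n : ℕ => a n * t ^ n) (t : ℝ) :
    Summable (fun n : ℕ => (n : ℝ) ^ 2 * a n * t ^ n) := by
  apply Summable.of_norm_bounded ((hconv (4 * |t|)).abs)
  intro n
  have h1 : (n : ℝ) ^ 2 ≤ 4 ^ n := by
    have : (n : ℝ) ≤ 2 ^ n := by exact_mod_cast (Nat.lt_two_pow_self (n := n)).le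
    calc (n:ℝ)^2 ≤ (2^n : ℝ)^2 := by
          apply pow_le_pow_left₀ (Nat.cast_nonneg n) this
      _ = 4 ^ n := by rw [← pow_mul, mul_comm, pow_mul]; norm_num
  simp only [Real.norm_eq_abs, abs_mul, abs_pow, abs_abs, abs_of_nonneg (hpos n),
    abs_of_nonneg (sq_nonneg ((n:ℝ))), mul_pow, abs_of_nonneg (pow_nonneg (abs_nonneg t) n),
    abs_of_nonneg (pow_nonneg (by norm_num : (0:ℝ) ≤ 4) n), sq_abs]
  calc (n : ℝ)^2 * a n * |t| ^ n ≤ 4 ^ n * a n * |t| ^ n := by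
        apply mul_le_mul_of_nonneg_right (mul_le_mul_of_nonneg_right h1 (hpos n)) (by positivity)
    _ = a n * (4 ^ n * |t| ^ n) := by ring

private theorem psum_lb (a : ℕ → ℝ) (hpos : ∀ n, 0 ≤ a n)
    (hconv : ∀ t : ℝ, Summable fun n : ℕ => a n * t ^ n) (t : ℝ) (ht : 0 ≤ t) :
    a 0 ≤ ∑' n : ℕ, a n * t ^ n := by
  have := Summable.le_tsum (hconv t) 0 (fun j _ => mul_nonneg (hpos j) (pow_nonneg ht j))
  simpa using this

private theorem lin_tsum (b : ℕ → ℝ) (hb : ∀ n, 2 ≤ n → b n = 0) :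
    ∑' n : ℕ, b n = b 0 + b 1 := by
  rw [tsum_eq_sum (s := Finset.range 2) (fun n hn => hb n (by simp at hn; omega))]
  simp [Finset.sum_range_succ]

private theorem mean_small (a : ℕ → ℝ) (hpos : ∀ n, 0 ≤ a n) (ha0 : 0 < a 0)
    (hconv : ∀ t : ℝ, Summable fun n : ℕ => a n * t ^ n) :
    ∃ t₁ : ℝ, 0 < t₁ ∧ meanK a t₁ < 1 / 2 := by
  have hSsum : Summable (fun n : ℕ => (n : ℝ) * a n) := by
    have := sumN a hpos hconv 1; simpa using this
  set S : ℝ := ∑' n : ℕ, (n : ℝ) * a n with hS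
  have hS0 : 0 ≤ S := tsum_nonneg (fun n => mul_nonneg (Nat.cast_nonneg n) (hpos n))
  refine ⟨min 1 (a 0 / (3 * (S + a 0))), lt_min one_pos (by positivity), ?_⟩
  set t₁ : ℝ := min 1 (a 0 / (3 * (S + a 0))) with ht₁def
  have ht₁pos : 0 < t₁ := lt_min one_pos (by positivity)
  have ht₁le1 : t₁ ≤ 1 := min_le_left _ _
  have hE1le : (∑' n : ℕ, (n : ℝ) * a n * t₁ ^ n) ≤ t₁ * S := by
    have h2 : t₁ * S = ∑' n : ℕ, t₁ * ((n:ℝ) * a n) := by rw [tsum_mul_left]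
    rw [h2]
    apply Summable.tsum_le_tsum _ (sumN a hpos hconv t₁) (hSsum.mul_left t₁)
    intro n
    rcases Nat.eq_zero_or_pos n with h | h
    · simp [h]
    · have : t₁ ^ n ≤ t₁ := pow_le_of_le_one ht₁pos.le ht₁le1 h.ne'
      calc (n:ℝ) * a n * t₁ ^ n ≤ (n:ℝ) * a n * t₁ := by
            apply mul_le_mul_of_nonneg_left this (mul_nonneg (Nat.cast_nonneg n) (hpos n))
        _ = t₁ * ((n:ℝ) * a n) := by ring
  have ht₁small : t₁ * (3 * (S + a 0)) ≤ a 0 := by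
    have := min_le_right 1 (a 0 / (3 * (S + a 0)))
    rw [le_div_iff₀ (by positivity)] at this
    exact this
  have h3 : t₁ * S < 1 / 2 * a 0 := by nlinarith
  rw [meanK]
  calc (∑' n : ℕ, (n : ℝ) * a n * t₁ ^ n) / (∑' n : ℕ, a n * t₁ ^ n)
      ≤ t₁ * S / a 0 := by
        apply div_le_div₀ (by positivity) hE1le ha0 (psum_lb a hpos hconv t₁ ht₁pos.le)
    _ < 1 / 2 := by rw [div_lt_iff₀ ha0]; linarith

private theorem mean_big (a : ℕ → ℝ) (hpos : ∀ n, 0 ≤ a n) (ha0 : 0 < a 0)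
    (hconv : ∀ t : ℝ, Summable fun n : ℕ => a n * t ^ n)
    (N : ℕ) (hN : 2 ≤ N) (haN : 0 < a N)
    (t : ℝ) (ht : max 1 (a 0 / a N + 1) ≤ t) : 1 / 2 < meanK a t := by
  have ht1 : (1:ℝ) ≤ t := le_trans (le_max_left _ _) ht
  have htpos : (0:ℝ) < t := lt_of_lt_of_le one_pos ht1
  have hfpos : 0 < ∑' n : ℕ, a n * t ^ n :=
    lt_of_lt_of_le ha0 (psum_lb a hpos hconv t htpos.le)
  have hshift : (∑' n : ℕ, a n * t ^ n) ≤ a 0 + ∑' n : ℕ, (n : ℝ) * a n * t ^ n := by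
    have hsum1 : Summable (fun n : ℕ => a (n+1) * t ^ (n+1)) :=
      (summable_nat_add_iff 1).mpr (hconv t)
    have hsum2 : Summable (fun n : ℕ => ((n:ℝ)+1) * a (n+1) * t ^ (n+1)) := by
      have := (summable_nat_add_iff (f := fun n : ℕ => (n : ℝ) * a n * t ^ n) 1).mpr
        (sumN a hpos hconv t)
      apply this.congr
      intro n; push_cast; ring
    have e1 : (∑' n : ℕ, a n * t ^ n) = a 0 + ∑' n : ℕ, a (n+1) * t ^ (n+1) := by
      simpa using Summable.tsum_eq_zero_add (hconv t)
    have e2 : (∑' n : ℕ, (n:ℝ) * a n * t ^ n) = ∑' n : ℕ, ((n:ℝ)+1) * a (n+1) * t ^ (n+1) := by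
      have := Summable.tsum_eq_zero_add (sumN a hpos hconv t)
      simp only [Nat.cast_zero, zero_mul, pow_zero, mul_one, zero_add] at this
      rw [this]
      exact tsum_congr (fun n => by push_cast; ring)
    rw [e1, e2]
    have : (∑' n : ℕ, a (n+1) * t ^ (n+1)) ≤ ∑' n : ℕ, ((n:ℝ)+1) * a (n+1) * t ^ (n+1) := by
      apply Summable.tsum_le_tsum _ hsum1 hsum2
      intro n
      have h1 : (1:ℝ) ≤ (n:ℝ) + 1 := by
        have := Nat.cast_nonneg (α := ℝ) n; linarith
      have hb : 0 ≤ a (n+1) * t ^ (n+1) := mul_nonneg (hpos (n+1)) (pow_nonneg htpos.le (n+1))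
      calc a (n+1) * t ^ (n+1) ≤ ((n:ℝ)+1) * (a (n+1) * t ^ (n+1)) :=
            le_mul_of_one_le_left hb h1
        _ = ((n:ℝ)+1) * a (n+1) * t ^ (n+1) := (mul_assoc _ _ _).symm
    linarith
  have hE1big : 2 * a 0 < ∑' n : ℕ, (n : ℝ) * a n * t ^ n := by
    have h1 : (N:ℝ) * a N * t ^ N ≤ ∑' n : ℕ, (n : ℝ) * a n * t ^ n :=
      Summable.le_tsum (sumN a hpos hconv t) N (fun j _ =>
        mul_nonneg (mul_nonneg (Nat.cast_nonneg j) (hpos j)) (pow_nonneg htpos.le j))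
    have h2 : t ≤ t ^ N := le_self_pow₀ ht1 (by omega)
    have h3 : (2:ℝ) ≤ (N:ℝ) := by exact_mod_cast hN
    have h4 : a 0 / a N + 1 ≤ t := le_trans (le_max_right _ _) ht
    have h5 : a 0 < a N * t := by
      have : a 0 / a N < t := lt_of_lt_of_le (by linarith [lt_add_one (a 0 / a N)]) h4
      rwa [div_lt_iff₀ haN, mul_comm] at this
    calc 2 * a 0 < 2 * (a N * t) := by linarith
      _ ≤ (N:ℝ) * (a N * t) := by nlinarith [mul_pos haN htpos]
      _ ≤ (N:ℝ) * (a N * t ^ N) := by nlinarith [mul_le_mul_of_nonneg_left h2 haN.le]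
      _ = (N:ℝ) * a N * t ^ N := by ring
      _ ≤ _ := h1
  rw [meanK, lt_div_iff₀ hfpos]
  linarith

private theorem var_big (a : ℕ → ℝ) (hpos : ∀ n, 0 ≤ a n) (ha0 : 0 < a 0)
    (hconv : ∀ t : ℝ, Summable fun n : ℕ => a n * t ^ n)
    (N : ℕ) (hN : 2 ≤ N) (haN : 0 < a N)
    (t : ℝ) (ht : 0 < t) (hm : meanK a t = 1 / 2) : 1 / 4 < varK a t := by
  have hfpos : 0 < ∑' n : ℕ, a n * t ^ n :=
    lt_of_lt_of_le ha0 (psum_lb a hpos hconv t ht.le)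
  have hE1 : (∑' n : ℕ, (n : ℝ) * a n * t ^ n) = 1 / 2 * ∑' n : ℕ, a n * t ^ n := by
    rw [meanK, div_eq_iff hfpos.ne'] at hm
    linarith
  have hdiff : (∑' n : ℕ, (n:ℝ)^2 * a n * t ^ n) - (∑' n : ℕ, (n : ℝ) * a n * t ^ n)
      = ∑' n : ℕ, ((n:ℝ)^2 - (n:ℝ)) * a n * t ^ n := by
    rw [← Summable.tsum_sub (sumN2 a hpos hconv t) (sumN a hpos hconv t)]
    exact tsum_congr (fun n => by ring)
  have hterm : ((N:ℝ)^2 - (N:ℝ)) * a N * t ^ N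
      ≤ ∑' n : ℕ, ((n:ℝ)^2 - (n:ℝ)) * a n * t ^ n := by
    apply Summable.le_tsum _ N
    · intro j _
      have : (j:ℝ) ≤ (j:ℝ)^2 := by
        rcases Nat.eq_zero_or_pos j with h | h
        · simp [h]
        · have : (1:ℝ) ≤ (j:ℝ) := by exact_mod_cast h
          nlinarith
      apply mul_nonneg (mul_nonneg (by linarith) (hpos j)) (pow_nonneg ht.le j)
    · exact ((sumN2 a hpos hconv t).sub (sumN a hpos hconv t)).congr (fun n => by ring)
  have h3 : (2:ℝ) ≤ (N:ℝ) := by exact_mod_cast hN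
  have h4 : 2 * (a N * t ^ N) ≤ ((N:ℝ)^2 - (N:ℝ)) * a N * t ^ N := by
    have h5 : (2:ℝ) ≤ (N:ℝ)^2 - (N:ℝ) := by nlinarith
    have := mul_le_mul_of_nonneg_right h5 (mul_nonneg haN.le (pow_nonneg ht.le N))
    calc 2 * (a N * t ^ N) ≤ ((N:ℝ)^2 - (N:ℝ)) * (a N * t ^ N) := this
      _ = ((N:ℝ)^2 - (N:ℝ)) * a N * t ^ N := by ring
  have hpow : 0 < a N * t ^ N := by positivity
  have hE2gt : (∑' n : ℕ, (n : ℝ) * a n * t ^ n) < ∑' n : ℕ, (n:ℝ)^2 * a n * t ^ n := by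
    nlinarith
  rw [varK, hm]
  have : 1/2 < (∑' n : ℕ, (n:ℝ)^2 * a n * t ^ n) / (∑' n : ℕ, a n * t ^ n) := by
    rw [lt_div_iff₀ hfpos]
    calc 1/2 * (∑' n : ℕ, a n * t ^ n) = ∑' n : ℕ, (n : ℝ) * a n * t ^ n := hE1.symm
      _ < _ := hE2gt
  nlinarith

private theorem contOnAux (c : ℕ → ℝ) (hc : ∀ n, 0 ≤ c n)
    (hs : ∀ t : ℝ, Summable fun n : ℕ => c n * t ^ n) (T : ℝ) :
    ContinuousOn (fun t : ℝ => ∑' n : ℕ, c n * t ^ n) (Set.Icc 0 T) := by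
  apply continuousOn_tsum (u := fun n => c n * T ^ n)
    (fun n => (continuous_const.mul (continuous_pow n)).continuousOn) (hs T)
  intro n x hx
  simp only [Pi.mul_apply]
  rw [Real.norm_eq_abs, abs_mul, abs_pow, abs_of_nonneg (hc n), abs_of_nonneg hx.1]
  exact mul_le_mul_of_nonneg_left (pow_le_pow_left₀ hx.1 hx.2 n) (hc n)

private theorem mean_cont (a : ℕ → ℝ) (hpos : ∀ n, 0 ≤ a n) (ha0 : 0 < a 0)
    (hconv : ∀ t : ℝ, Summable fun n : ℕ => a n * t ^ n)
    (t₁ t₂ : ℝ) (ht₁ : 0 < t₁) :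
    ContinuousOn (meanK a) (Set.Icc t₁ t₂) := by
  have hsub : Set.Icc t₁ t₂ ⊆ Set.Icc 0 t₂ := Set.Icc_subset_Icc_left ht₁.le
  have hc1 : ContinuousOn (fun t : ℝ => ∑' n : ℕ, (n : ℝ) * a n * t ^ n) (Set.Icc t₁ t₂) := by
    have h := (contOnAux (fun n : ℕ => (n : ℝ) * a n)
      (fun n => mul_nonneg (Nat.cast_nonneg n) (hpos n))
      (fun t => sumN a hpos hconv t) t₂).mono hsub
    exact h
  have hc2 : ContinuousOn (fun t : ℝ => ∑' n : ℕ, a n * t ^ n) (Set.Icc t₁ t₂) :=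
    (contOnAux a hpos hconv t₂).mono hsub
  exact hc1.div hc2 (fun x hx =>
    (lt_of_lt_of_le ha0 (psum_lb a hpos hconv x (le_trans ht₁.le hx.1))).ne')


/-- Abi-Khuzam, Theorem 1.2.4. For `f ∈ K` entire,
`sup_{t>0} σ_f²(t) = 1/4` if and only if `f(z) = a + bz` with `a, b > 0`
(given `a₀ > 0`, this means `a₁ > 0` and `aₙ = 0` for `n ≥ 2`). -/
theorem statement2 (a : ℕ → ℝ)
    (hpos : ∀ n, 0 ≤ a n) (ha0 : 0 < a 0) (ha1 : ∃ n, 1 ≤ n ∧ 0 < a n)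
    (hconv : ∀ t : ℝ, Summable fun n : ℕ => a n * t ^ n) :
    (⨆ t : Set.Ioi (0 : ℝ), (varK a t.1 : EReal)) = ((1 / 4 : ℝ) : EReal) ↔
      (0 < a 1 ∧ ∀ n, 2 ≤ n → a n = 0) := by
  constructor
  · intro hsup
    have hbound : ∀ t : ℝ, 0 < t → varK a t ≤ 1 / 4 := by
      intro t ht
      have h := le_iSup (fun s : Set.Ioi (0:ℝ) => (varK a s.1 : EReal)) ⟨t, ht⟩
      rw [hsup] at h
      exact_mod_cast h
    have key : ∀ N, 2 ≤ N → a N = 0 := by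
      intro N hN
      by_contra haN'
      have haN : 0 < a N := lt_of_le_of_ne (hpos N) (Ne.symm haN')
      obtain ⟨t₁, ht₁pos, hm1⟩ := mean_small a hpos ha0 hconv
      set t₂ : ℝ := max t₁ (max 1 (a 0 / a N + 1)) with ht₂def
      have hm2 : 1/2 < meanK a t₂ :=
        mean_big a hpos ha0 hconv N hN haN t₂ (le_max_right _ _)
      have ht₁₂ : t₁ ≤ t₂ := le_max_left _ _
      obtain ⟨tstar, htstar, hmstar⟩ :=
        intermediate_value_Icc ht₁₂ (mean_cont a hpos ha0 hconv t₁ t₂ ht₁pos) ⟨hm1.le, hm2.le⟩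
      have htstarpos : 0 < tstar := lt_of_lt_of_le ht₁pos htstar.1
      exact absurd (hbound tstar htstarpos)
        (not_le.mpr (var_big a hpos ha0 hconv N hN haN tstar htstarpos hmstar))
    refine ⟨?_, key⟩
    obtain ⟨n, hn1, hapos⟩ := ha1
    rcases Nat.lt_or_ge n 2 with h | h
    · interval_cases n
      · exact hapos
    · exact absurd (key n h) (ne_of_gt hapos)
  · rintro ⟨ha1pos, hzero⟩
    have hval : ∀ t : ℝ, 0 < t →
        varK a t = a 1 * t / (a 0 + a 1 * t) - (a 1 * t / (a 0 + a 1 * t))^2 := by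
      intro t ht
      have e0 : (∑' n : ℕ, a n * t ^ n) = a 0 + a 1 * t := by
        rw [lin_tsum (fun n => a n * t ^ n) (fun n hn => by simp [hzero n hn])]
        simp
      have e1 : (∑' n : ℕ, (n:ℝ) * a n * t ^ n) = a 1 * t := by
        rw [lin_tsum (fun n => (n:ℝ) * a n * t ^ n) (fun n hn => by simp [hzero n hn])]
        simp
      have e2 : (∑' n : ℕ, (n:ℝ)^2 * a n * t ^ n) = a 1 * t := by
        rw [lin_tsum (fun n => (n:ℝ)^2 * a n * t ^ n) (fun n hn => by simp [hzero n hn])]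
        simp
      rw [varK, meanK, e0, e1, e2]
    have hub : ∀ t : ℝ, 0 < t → varK a t ≤ 1 / 4 := by
      intro t ht
      rw [hval t ht]
      have hf : 0 < a 0 + a 1 * t := by positivity
      set p := a 1 * t / (a 0 + a 1 * t) with hp
      nlinarith [sq_nonneg (p - 1/2)]
    have hattain : varK a (a 0 / a 1) = 1 / 4 := by
      have htpos : 0 < a 0 / a 1 := by positivity
      rw [hval _ htpos]
      have h1 : a 1 * (a 0 / a 1) = a 0 := mul_div_cancel₀ _ (ne_of_gt ha1pos)
      rw [h1]
      have : a 0 / (a 0 + a 0) = 1/2 := by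
        rw [show a 0 + a 0 = 2 * a 0 by ring, div_mul_eq_div_div_swap]
        field_simp
      rw [this]; norm_num
    apply le_antisymm
    · apply iSup_le
      rintro ⟨t, ht⟩
      exact_mod_cast EReal.coe_le_coe_iff.mpr (hub t ht)
    · have hmem : a 0 / a 1 ∈ Set.Ioi (0:ℝ) := div_pos ha0 ha1pos
      have h := le_iSup (fun s : Set.Ioi (0:ℝ) => (varK a s.1 : EReal)) ⟨_, hmem⟩
      simp only at h
      rw [hattain] at h
      exact h
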